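/- arXiv:1810.05740 — 9 statements merged into one kernel-verified Lean document; each statement's English description precedes it below -/
import Mathlib

section
/- Let W and V be vector spaces over ℝ and φ : W → V a linear map. Let S be the set of linear maps A : V → W such that both id_W + A∘φ and id_V + φ∘A are bijective. Then: (a) 0 ∈ S; (b) if A₁, A₂ ∈ S then A₁ ⊙ A₂ := A₁ + A₂ + A₁∘φ∘A₂ ∈ S; (c) ⊙ is associative on S; (d) A ⊙ 0 = 0 ⊙ A = A for all A ∈ S; (e) for A ∈ S, the map A† := −A∘(id_V + φ∘A)⁻¹ equals −(id_W + A∘φ)⁻¹∘A, lies in S, and satisfies A ⊙ A† = A† ⊙ A = 0. -/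
/-- The set `GL(φ)₁` of linear maps `A : V → W` such that `1 + A∘φ` and `1 + φ∘A` are
bijective. -/
def GLone {W V : Type*} [AddCommGroup W] [Module ℝ W] [AddCommGroup V] [Module ℝ V]
    (φ : W →ₗ[ℝ] V) : Set (V →ₗ[ℝ] W) :=
  {A | Function.Bijective ⇑((LinearMap.id : W →ₗ[ℝ] W) + A ∘ₗ φ) ∧
       Function.Bijective ⇑((LinearMap.id : V →ₗ[ℝ] V) + φ ∘ₗ A)}

/-- The operation `A₁ ⊙ A₂ := A₁ + A₂ + A₁∘φ∘A₂`. -/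
def odotL {W V : Type*} [AddCommGroup W] [Module ℝ W] [AddCommGroup V] [Module ℝ V]
    (φ : W →ₗ[ℝ] V) (A₁ A₂ : V →ₗ[ℝ] W) : V →ₗ[ℝ] W :=
  A₁ + A₂ + A₁ ∘ₗ φ ∘ₗ A₂

/-- The candidate inverse `A† := -A ∘ (1 + φ∘A)⁻¹`. -/
noncomputable def daggerL {W V : Type*} [AddCommGroup W] [Module ℝ W] [AddCommGroup V]
    [Module ℝ V] (φ : W →ₗ[ℝ] V) (A : V →ₗ[ℝ] W)
    (h₂ : Function.Bijective ⇑((LinearMap.id : V →ₗ[ℝ] V) + φ ∘ₗ A)) : V →ₗ[ℝ] W :=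
  -(A ∘ₗ (LinearEquiv.ofBijective ((LinearMap.id : V →ₗ[ℝ] V) + φ ∘ₗ A) h₂).symm.toLinearMap)

section Aux

variable {W V : Type*} [AddCommGroup W] [Module ℝ W] [AddCommGroup V] [Module ℝ V]
    (φ : W →ₗ[ℝ] V)

lemma compW (A₁ A₂ : V →ₗ[ℝ] W) :
    ((LinearMap.id : W →ₗ[ℝ] W) + (odotL φ A₁ A₂) ∘ₗ φ) =
      ((LinearMap.id : W →ₗ[ℝ] W) + A₁ ∘ₗ φ) ∘ₗ ((LinearMap.id : W →ₗ[ℝ] W) + A₂ ∘ₗ φ) := by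
  ext x
  simp [odotL, map_add]
  abel

lemma compV (A₁ A₂ : V →ₗ[ℝ] W) :
    ((LinearMap.id : V →ₗ[ℝ] V) + φ ∘ₗ (odotL φ A₁ A₂)) =
      ((LinearMap.id : V →ₗ[ℝ] V) + φ ∘ₗ A₁) ∘ₗ ((LinearMap.id : V →ₗ[ℝ] V) + φ ∘ₗ A₂) := by
  ext x
  simp [odotL, map_add]
  abel

end Aux

/-- `GL(φ)₁` with the operation `⊙` is a group: it contains `0`, is closed
under `⊙`, the operation is associative with identity `0`, and `A†` is a two-sided inverse
equal to `-(1 + A∘φ)⁻¹ ∘ A`. -/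
theorem stmt2 {W V : Type*} [AddCommGroup W] [Module ℝ W] [AddCommGroup V] [Module ℝ V]
    (φ : W →ₗ[ℝ] V) :
    -- (a)
    ((0 : V →ₗ[ℝ] W) ∈ GLone φ) ∧
    -- (b)
    (∀ A₁ A₂ : V →ₗ[ℝ] W, A₁ ∈ GLone φ → A₂ ∈ GLone φ → odotL φ A₁ A₂ ∈ GLone φ) ∧
    -- (c)
    (∀ A₁ A₂ A₃ : V →ₗ[ℝ] W, A₁ ∈ GLone φ → A₂ ∈ GLone φ → A₃ ∈ GLone φ →
      odotL φ (odotL φ A₁ A₂) A₃ = odotL φ A₁ (odotL φ A₂ A₃)) ∧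
    -- (d)
    (∀ A ∈ GLone φ, odotL φ A 0 = A ∧ odotL φ 0 A = A) ∧
    -- (e)
    (∀ (A : V →ₗ[ℝ] W) (h₁ : Function.Bijective ⇑((LinearMap.id : W →ₗ[ℝ] W) + A ∘ₗ φ))
        (h₂ : Function.Bijective ⇑((LinearMap.id : V →ₗ[ℝ] V) + φ ∘ₗ A)),
      daggerL φ A h₂ =
        -((LinearEquiv.ofBijective ((LinearMap.id : W →ₗ[ℝ] W) + A ∘ₗ φ) h₁).symm.toLinearMap
          ∘ₗ A) ∧
      daggerL φ A h₂ ∈ GLone φ ∧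
      odotL φ A (daggerL φ A h₂) = 0 ∧ odotL φ (daggerL φ A h₂) A = 0) := by
  refine ⟨?_, ?_, ?_, ?_, ?_⟩
  · constructor <;> simp [GLone, Function.bijective_id]
  · rintro A₁ A₂ ⟨h₁W, h₁V⟩ ⟨h₂W, h₂V⟩
    constructor
    · rw [compW]
      rw [LinearMap.coe_comp]
      exact h₁W.comp h₂W
    · rw [compV]
      rw [LinearMap.coe_comp]
      exact h₁V.comp h₂V
  · intro A₁ A₂ A₃ _ _ _
    ext x
    simp [odotL, map_add]
    abel
  · intro A _
    constructor <;> (ext x; simp [odotL])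
  · intro A h₁ h₂
    set e₁ := LinearEquiv.ofBijective ((LinearMap.id : W →ₗ[ℝ] W) + A ∘ₗ φ) h₁ with he₁
    set e₂ := LinearEquiv.ofBijective ((LinearMap.id : V →ₗ[ℝ] V) + φ ∘ₗ A) h₂ with he₂
    have he₂app : ∀ x : V, e₂ x = x + φ (A x) := fun x => by
      simp [he₂, LinearEquiv.ofBijective_apply]
    have he₁app : ∀ w : W, e₁ w = w + A (φ w) := fun w => by
      simp [he₁, LinearEquiv.ofBijective_apply]
    have key : ∀ x : V, A x = A (e₂.symm x) + A (φ (A (e₂.symm x))) := by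
      intro x
      have : e₂ (e₂.symm x) = x := e₂.apply_symm_apply x
      rw [he₂app] at this
      calc A x = A (e₂.symm x + φ (A (e₂.symm x))) := by rw [this]
        _ = A (e₂.symm x) + A (φ (A (e₂.symm x))) := by rw [map_add]
    have hfst : daggerL φ A h₂ =
        -(e₁.symm.toLinearMap ∘ₗ A) := by
      ext x
      simp only [daggerL, LinearMap.neg_apply, LinearMap.comp_apply,
        LinearEquiv.coe_coe, neg_inj]
      apply e₁.injective
      rw [e₁.apply_symm_apply, he₁app]
      exact (key x).symm
    refine ⟨hfst, ?_, ?_, ?_⟩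
    · constructor
      · -- 1 + A† φ is bijective: it is a two-sided inverse of 1 + A φ
        have hleft : ∀ w : W,
            ((LinearMap.id : W →ₗ[ℝ] W) + A ∘ₗ φ)
              (((LinearMap.id : W →ₗ[ℝ] W) + (daggerL φ A h₂) ∘ₗ φ) w) = w := by
          intro w
          simp only [daggerL, LinearMap.add_apply, LinearMap.comp_apply, LinearMap.id_apply,
            LinearMap.neg_apply, LinearEquiv.coe_coe, map_add, map_neg, ← he₂]
          rw [key (φ w)]
          abel
        have hright : ∀ w : W,
            ((LinearMap.id : W →ₗ[ℝ] W) + (daggerL φ A h₂) ∘ₗ φ)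
              (((LinearMap.id : W →ₗ[ℝ] W) + A ∘ₗ φ) w) = w := by
          intro w
          simp only [daggerL, LinearMap.add_apply, LinearMap.comp_apply, LinearMap.id_apply,
            LinearMap.neg_apply, LinearEquiv.coe_coe, map_add, map_neg, ← he₂]
          have hsymm : e₂.symm (φ w + φ (A (φ w))) = φ w := by
            have : e₂ (φ w) = φ w + φ (A (φ w)) := he₂app (φ w)
            rw [← this, e₂.symm_apply_apply]
          have h' : A (e₂.symm (φ w)) + A (e₂.symm (φ (A (φ w)))) = A (φ w) := by
            rw [← map_add, ← map_add, hsymm]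
          nth_rewrite 1 [← h']
          abel
        exact Function.bijective_iff_has_inverse.mpr
          ⟨⇑((LinearMap.id : W →ₗ[ℝ] W) + A ∘ₗ φ), fun w => hleft w, fun w => hright w⟩
      · -- 1 + φ A† equals e₂.symm
        have : ((LinearMap.id : V →ₗ[ℝ] V) + φ ∘ₗ (daggerL φ A h₂)) =
            e₂.symm.toLinearMap := by
          ext x
          simp only [daggerL, LinearMap.add_apply, LinearMap.comp_apply, LinearMap.id_apply,
            LinearMap.neg_apply, LinearEquiv.coe_coe, map_neg, ← he₂]
          have : e₂ (e₂.symm x) = x := e₂.apply_symm_apply x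
          rw [he₂app] at this
          nth_rewrite 1 [← this]
          abel
        rw [this]
        exact e₂.symm.bijective
    · ext x
      simp only [odotL, daggerL, LinearMap.add_apply, LinearMap.comp_apply,
        LinearMap.neg_apply, LinearEquiv.coe_coe, map_neg, LinearMap.zero_apply, ← he₂]
      rw [key x]
      abel
    · ext x
      simp only [odotL, daggerL, LinearMap.add_apply, LinearMap.comp_apply,
        LinearMap.neg_apply, LinearEquiv.coe_coe, map_neg, LinearMap.zero_apply, ← he₂]
      have hsum : e₂.symm x + e₂.symm (φ (A x)) = x := by
        rw [← map_add]
        have : e₂ x = x + φ (A x) := he₂app x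
        rw [← this, e₂.symm_apply_apply]
      calc -A (e₂.symm x) + A x + -A (e₂.symm (φ (A x)))
          = A x - A (e₂.symm x + e₂.symm (φ (A x))) := by rw [map_add]; abel
        _ = 0 := by rw [hsum]; abel
end

section
/- Let W and V be vector spaces over ℝ and φ : W → V a linear map. For A ∈ GL(φ)₁ let A† := −A∘(id_V + φ∘A)⁻¹. Then for all A₁, A₂ ∈ GL(φ)₁: (a) id_W + A₂†∘φ = (id_W + A₂∘φ)⁻¹; (b) the Peiffer identity holds: (id_W + A₂∘φ)⁻¹ ∘ A₁ ∘ (id_V + φ∘A₂) = A₂† ⊙ A₁ ⊙ A₂. -/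

lemma stmt5a {W V : Type*} [AddCommGroup W] [Module ℝ W] [AddCommGroup V] [Module ℝ V]
    (φ : W →ₗ[ℝ] V) (A₂ : V →ₗ[ℝ] W)
    (h₁ : Function.Bijective ⇑((LinearMap.id : W →ₗ[ℝ] W) + A₂ ∘ₗ φ))
    (h₂ : Function.Bijective ⇑((LinearMap.id : V →ₗ[ℝ] V) + φ ∘ₗ A₂)) :
    (LinearMap.id : W →ₗ[ℝ] W) + daggerL φ A₂ h₂ ∘ₗ φ =
      (LinearEquiv.ofBijective ((LinearMap.id : W →ₗ[ℝ] W) + A₂ ∘ₗ φ) h₁).symm.toLinearMap := by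
  set e₂ := LinearEquiv.ofBijective ((LinearMap.id : V →ₗ[ℝ] V) + φ ∘ₗ A₂) h₂ with he₂
  set e₁ := LinearEquiv.ofBijective ((LinearMap.id : W →ₗ[ℝ] W) + A₂ ∘ₗ φ) h₁ with he₁
  have key : ∀ z : V, φ (A₂ (e₂.symm z)) = z - e₂.symm z := by
    intro z
    have h := e₂.apply_symm_apply z
    rw [he₂] at h
    simp only [LinearEquiv.ofBijective_apply, LinearMap.add_apply, LinearMap.id_apply,
      LinearMap.comp_apply] at h
    exact eq_sub_of_add_eq' h
  refine LinearMap.ext fun x => ?_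
  rw [eq_comm]
  show e₁.symm x = _
  rw [LinearEquiv.symm_apply_eq, he₁]
  simp only [LinearEquiv.ofBijective_apply, daggerL, LinearMap.add_apply, LinearMap.id_apply,
    LinearMap.comp_apply, LinearMap.neg_apply, LinearEquiv.coe_coe, map_add, map_neg]
  rw [key (φ x)]
  simp only [map_sub]
  abel

/-- for `A₁, A₂ ∈ GL(φ)₁`, one has `1 + A₂†∘φ = (1 + A₂∘φ)⁻¹` and the Peiffer
identity `(1 + A₂∘φ)⁻¹ ∘ A₁ ∘ (1 + φ∘A₂) = A₂† ⊙ A₁ ⊙ A₂`. -/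
theorem stmt5 {W V : Type*} [AddCommGroup W] [Module ℝ W] [AddCommGroup V] [Module ℝ V]
    (φ : W →ₗ[ℝ] V) :
    -- (a)
    (∀ (A₂ : V →ₗ[ℝ] W)
        (h₁ : Function.Bijective ⇑((LinearMap.id : W →ₗ[ℝ] W) + A₂ ∘ₗ φ))
        (h₂ : Function.Bijective ⇑((LinearMap.id : V →ₗ[ℝ] V) + φ ∘ₗ A₂)),
      (LinearMap.id : W →ₗ[ℝ] W) + daggerL φ A₂ h₂ ∘ₗ φ =
        (LinearEquiv.ofBijective ((LinearMap.id : W →ₗ[ℝ] W) + A₂ ∘ₗ φ)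
          h₁).symm.toLinearMap) ∧
    -- (b)
    (∀ (A₁ A₂ : V →ₗ[ℝ] W), A₁ ∈ GLone φ →
      ∀ (h₁ : Function.Bijective ⇑((LinearMap.id : W →ₗ[ℝ] W) + A₂ ∘ₗ φ))
        (h₂ : Function.Bijective ⇑((LinearMap.id : V →ₗ[ℝ] V) + φ ∘ₗ A₂)),
      (LinearEquiv.ofBijective ((LinearMap.id : W →ₗ[ℝ] W) + A₂ ∘ₗ φ) h₁).symm.toLinearMap
          ∘ₗ A₁ ∘ₗ ((LinearMap.id : V →ₗ[ℝ] V) + φ ∘ₗ A₂) =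
        odotL φ (odotL φ (daggerL φ A₂ h₂) A₁) A₂) := by
  refine ⟨fun A₂ h₁ h₂ => stmt5a φ A₂ h₁ h₂, fun A₁ A₂ _ h₁ h₂ => ?_⟩
  rw [← stmt5a φ A₂ h₁ h₂]
  set e₂ := LinearEquiv.ofBijective ((LinearMap.id : V →ₗ[ℝ] V) + φ ∘ₗ A₂) h₂ with he₂
  have key : ∀ z : V, e₂.symm (z + φ (A₂ z)) = z := by
    intro z
    have h := e₂.symm_apply_apply z
    rw [he₂] at h
    simpa only [LinearEquiv.ofBijective_apply, LinearMap.add_apply, LinearMap.id_apply,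
      LinearMap.comp_apply] using h
  refine LinearMap.ext fun x => ?_
  have key2 : A₂ (e₂.symm x) = A₂ x - A₂ (e₂.symm (φ (A₂ x))) := by
    rw [eq_sub_iff_add_eq, ← map_add, ← map_add, key x]
  simp only [odotL, daggerL, LinearMap.add_apply, LinearMap.id_apply, LinearMap.comp_apply,
    LinearMap.neg_apply, map_add, map_neg, LinearEquiv.coe_coe, ← he₂]
  rw [key2]
  abel
end

section
/- Let (i : G → H) be a crossed module of groups and let (ρ₀¹, ρ₀⁰, ρ₁) be a 2-representation of it on a linear map φ : W → V of real vector spaces. Equip G × H with the group structure (g₀,h₀)·(g₁,h₁) := (g₀^{h₁}·g₁, h₀h₁). For (g,h) ∈ G × H define the linear map ρ̄(g,h) : W × V → W × V by ρ̄(g,h)(w,v) := (ρ₀¹(h·i(g))(w) + ρ₀¹(h)(ρ₁(g)(v)), ρ₀⁰(h)(v)). Then each ρ̄(g,h) is a linear automorphism of W × V and ρ̄ is a group homomorphism: ρ̄((g₀,h₀)·(g₁,h₁)) = ρ̄(g₀,h₀) ∘ ρ̄(g₁,h₁) for all g₀,g₁ ∈ G and h₀,h₁ ∈ H. -/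
/-- The honest representation `ρ̄(g,h)(w,v) = (ρ₀¹(h·i g)(w) + ρ₀¹(h)(ρ₁(g)(v)), ρ₀⁰(h)(v))`
of the semidirect product on `W × V`. -/
def rhoBar {G H W V : Type*} [Group G] [Group H] [AddCommGroup W] [Module ℝ W]
    [AddCommGroup V] [Module ℝ V] (i : G →* H)
    (ρW : H → W ≃ₗ[ℝ] W) (ρV : H → V ≃ₗ[ℝ] V) (ρ₁ : G → V →ₗ[ℝ] W)
    (g : G) (h : H) : W × V → W × V :=
  fun p => (ρW (h * i g) p.1 + ρW h (ρ₁ g p.2), ρV h p.2)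

/-- given a 2-representation of a crossed module, each `ρ̄(g,h)` is a linear
automorphism of `W × V` and `ρ̄` is a group homomorphism for the semidirect product
`(g₀,h₀)·(g₁,h₁) = (g₀^{h₁}·g₁, h₀h₁)`. -/
theorem stmt7 {G : Type*} {H : Type*} [Group G] [Group H] (i : G →* H) (act : G → H → G)
    (hact_one : ∀ g : G, act g 1 = g)
    (hact_mul : ∀ (g : G) (h₀ h₁ : H), act (act g h₀) h₁ = act g (h₀ * h₁))
    (hact_gmul : ∀ (g₀ g₁ : G) (h : H), act (g₀ * g₁) h = act g₀ h * act g₁ h)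
    (hequiv : ∀ (g : G) (h : H), i (act g h) = h⁻¹ * i g * h)
    (hpeiffer : ∀ g₁ g₂ : G, act g₁ (i g₂) = g₂⁻¹ * g₁ * g₂)
    {W : Type*} {V : Type*} [AddCommGroup W] [Module ℝ W] [AddCommGroup V] [Module ℝ V]
    (φ : W →ₗ[ℝ] V) (ρW : H → W ≃ₗ[ℝ] W) (ρV : H → V ≃ₗ[ℝ] V) (ρ₁ : G → V →ₗ[ℝ] W)
    (hρW_mul : ∀ (h₀ h₁ : H) (w : W), ρW (h₀ * h₁) w = ρW h₀ (ρW h₁ w))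
    (hρV_mul : ∀ (h₀ h₁ : H) (v : V), ρV (h₀ * h₁) v = ρV h₀ (ρV h₁ v))
    (hφρ : ∀ (h : H) (w : W), φ (ρW h w) = ρV h (φ w))
    (hρ₁_mul : ∀ (g₀ g₁ : G) (v : V),
      ρ₁ (g₀ * g₁) v = ρ₁ g₀ v + ρ₁ g₁ v + ρ₁ g₀ (φ (ρ₁ g₁ v)))
    (hρV_i : ∀ (g : G) (v : V), ρV (i g) v = v + φ (ρ₁ g v))
    (hρW_i : ∀ (g : G) (w : W), ρW (i g) w = w + ρ₁ g (φ w))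
    (hρ₁_act : ∀ (g : G) (h : H) (v : V), ρ₁ (act g h) v = (ρW h).symm (ρ₁ g (ρV h v))) :
    -- each ρ̄(g,h) is a linear automorphism of W × V
    (∀ (g : G) (h : H),
      IsLinearMap ℝ (rhoBar i ρW ρV ρ₁ g h) ∧ Function.Bijective (rhoBar i ρW ρV ρ₁ g h)) ∧
    -- ρ̄ is a group homomorphism
    (∀ (g₀ g₁ : G) (h₀ h₁ : H),
      rhoBar i ρW ρV ρ₁ (act g₀ h₁ * g₁) (h₀ * h₁) =
        rhoBar i ρW ρV ρ₁ g₀ h₀ ∘ rhoBar i ρW ρV ρ₁ g₁ h₁) :=  by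
  constructor
  · intro g h
    refine ⟨⟨?_, ?_⟩, ?_⟩
    · intro p q
      simp [rhoBar, map_add, Prod.ext_iff]
      abel
    · intro c p
      simp [rhoBar, map_smul, Prod.ext_iff, smul_add]
    · rw [Function.bijective_iff_has_inverse]
      refine ⟨fun p => ((ρW (h * i g)).symm (p.1 - ρW h (ρ₁ g ((ρV h).symm p.2))),
        (ρV h).symm p.2), ?_, ?_⟩
      · intro p
        simp [rhoBar, Prod.ext_iff]
      · intro p
        simp [rhoBar, Prod.ext_iff]
  · intro g₀ g₁ h₀ h₁
    funext p
    obtain ⟨w, v⟩ := p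
    have key : i (act g₀ h₁ * g₁) = h₁⁻¹ * i g₀ * h₁ * i g₁ := by
      rw [map_mul, hequiv]
    refine Prod.ext ?_ ?_
    · show ρW (h₀ * h₁ * i (act g₀ h₁ * g₁)) w + ρW (h₀ * h₁) (ρ₁ (act g₀ h₁ * g₁) v) =
        ρW (h₀ * i g₀) (ρW (h₁ * i g₁) w + ρW h₁ (ρ₁ g₁ v)) + ρW h₀ (ρ₁ g₀ (ρV h₁ v))
      have e1 : h₀ * h₁ * i (act g₀ h₁ * g₁) = (h₀ * i g₀) * (h₁ * i g₁) := by
        rw [key]; group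
      rw [e1, hρW_mul (h₀ * i g₀)]
      rw [hρ₁_mul, hρ₁_act, hρ₁_act]
      have e2 : ∀ w, ρW (h₀ * h₁) w = ρW h₀ (ρW h₁ w) := hρW_mul h₀ h₁
      have e3 : ∀ w, ρW (h₀ * i g₀) w = ρW h₀ (ρW (i g₀) w) := hρW_mul h₀ (i g₀)
      simp only [map_add, e2, e3, LinearEquiv.apply_symm_apply, hρW_i, hφρ]
      abel
    · show ρV (h₀ * h₁) v = ρV h₀ (ρV h₁ v)
      exact hρV_mul h₀ h₁ v
end

section
/- Let (i : G → H) be a crossed module of groups. Then for any q ≥ 1 and any elements g₁,…,g_q, g'₁,…,g'_q ∈ G and h₁,…,h_q ∈ H, the following identity holds: the ordered product over k = 1,…,q of (g_k·g'_k)^{h_{k+1}h_{k+2}⋯h_q} equals the ordered product over k = 1,…,q of g_k^{h_{k+1}⋯h_q} multiplied by the ordered product over k = 1,…,q of (g'_k)^{h_{k+1}·i(g_{k+1})·h_{k+2}·i(g_{k+2})⋯h_q·i(g_q)} (all empty exponent products being the identity of H). -/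
/-- in a crossed module `i : G → H`, for `q = n+1 ≥ 1` elements, the identity
`∏ₖ (gₖ·g'ₖ)^{h_{k+1}⋯h_q} = (∏ₖ gₖ^{h_{k+1}⋯h_q}) · (∏ₖ (g'ₖ)^{h_{k+1}i(g_{k+1})⋯h_q i(g_q)})`
holds, all products being ordered. -/
theorem stmt9 {G : Type*} {H : Type*} [Group G] [Group H] (i : G →* H) (act : G → H → G)
    (hact_one : ∀ g : G, act g 1 = g)
    (hact_mul : ∀ (g : G) (h₀ h₁ : H), act (act g h₀) h₁ = act g (h₀ * h₁))
    (hact_gmul : ∀ (g₀ g₁ : G) (h : H), act (g₀ * g₁) h = act g₀ h * act g₁ h)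
    (hequiv : ∀ (g : G) (h : H), i (act g h) = h⁻¹ * i g * h)
    (hpeiffer : ∀ g₁ g₂ : G, act g₁ (i g₂) = g₂⁻¹ * g₁ * g₂) :
    ∀ (n : ℕ) (g g' : Fin (n + 1) → G) (h : Fin (n + 1) → H),
      (List.ofFn fun k : Fin (n + 1) =>
          act (g k * g' k) (((List.ofFn h).drop (k.1 + 1)).prod)).prod =
        (List.ofFn fun k : Fin (n + 1) =>
            act (g k) (((List.ofFn h).drop (k.1 + 1)).prod)).prod *
          (List.ofFn fun k : Fin (n + 1) =>
            act (g' k)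
              (((List.ofFn fun j : Fin (n + 1) => h j * i (g j)).drop (k.1 + 1)).prod)).prod := by
  have lem : ∀ (n : ℕ) (g : Fin (n+1) → G) (h : Fin (n+1) → H),
      (List.ofFn fun k : Fin (n+1) => h k * i (g k)).prod
        = (List.ofFn h).prod *
          i ((List.ofFn fun k : Fin (n+1) =>
              act (g k) (((List.ofFn h).drop (k.1+1)).prod)).prod) := by
    intro n
    induction n with
    | zero =>
      intro g h
      simp [hact_one]
    | succ n ih =>
      intro g h
      rw [List.ofFn_succ (f := fun k : Fin (n+2) => h k * i (g k)),
          List.ofFn_succ (f := fun k : Fin (n+2) => act (g k) (((List.ofFn h).drop (k.1+1)).prod)),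
          List.ofFn_succ (f := h)]
      simp only [Fin.val_succ, Fin.val_zero, List.drop_succ_cons, List.drop_zero,
        List.prod_cons]
      rw [ih (fun j => g j.succ) (fun j => h j.succ)]
      rw [map_mul, hequiv]
      group
  intro n
  induction n with
  | zero =>
    intro g g' h
    simp [hact_one, hact_gmul]
  | succ n ih =>
    intro g g' h
    rw [List.ofFn_succ (f := fun k : Fin (n+2) =>
          act (g k * g' k) (((List.ofFn h).drop (k.1+1)).prod)),
        List.ofFn_succ (f := fun k : Fin (n+2) =>
          act (g k) (((List.ofFn h).drop (k.1+1)).prod)),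
        List.ofFn_succ (f := fun k : Fin (n+2) =>
          act (g' k) (((List.ofFn fun j : Fin (n+2) => h j * i (g j)).drop (k.1+1)).prod)),
        List.ofFn_succ (f := h),
        List.ofFn_succ (f := fun j : Fin (n+2) => h j * i (g j))]
    simp only [Fin.val_succ, Fin.val_zero, List.drop_succ_cons, List.drop_zero,
      List.prod_cons]
    rw [ih (fun j => g j.succ) (fun j => g' j.succ) (fun j => h j.succ)]
    set Ht := (List.ofFn fun j : Fin (n+1) => h j.succ).prod with hHt
    set A := (List.ofFn fun k : Fin (n+1) =>
      act (g k.succ) (((List.ofFn fun j : Fin (n+1) => h j.succ).drop (k.1+1)).prod)).prod with hA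
    set B := (List.ofFn fun k : Fin (n+1) =>
      act (g' k.succ)
        (((List.ofFn fun j : Fin (n+1) => h j.succ * i (g j.succ)).drop (k.1+1)).prod)).prod with hB
    have key : (List.ofFn fun j : Fin (n+1) => h j.succ * i (g j.succ)).prod = Ht * i A := by
      rw [hA, hHt]; exact lem n (fun j => g j.succ) (fun j => h j.succ)
    rw [key, hact_gmul]
    have move : act (g' 0) Ht * A = A * act (g' 0) (Ht * i A) := by
      rw [← hact_mul, hpeiffer]
      group
    calc act (g 0) Ht * act (g' 0) Ht * (A * B)
        = act (g 0) Ht * (act (g' 0) Ht * A) * B := by group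
      _ = act (g 0) Ht * (A * act (g' 0) (Ht * i A)) * B := by rw [move]
      _ = act (g 0) Ht * A * (act (g' 0) (Ht * i A) * B) := by group
end

section
/- Let (i : G → H) be a crossed module of groups with a 2-representation (ρ₀¹, ρ₀⁰, ρ₁) on a linear map φ : W → V of real vector spaces, and let ω₀ : H × H → V, ω₁ : G × G → W, α : H × G → W, ϕ : G → V be arbitrary maps. Define ε : G × W → H × V by ε(g,w) := (i(g), φ(w) + ϕ(g)). Then ε is multiplicative for the twisted products, i.e. ε((g₁,w₁)∗(g₂,w₂)) = ε(g₁,w₁)∗ε(g₂,w₂) for all g₁,g₂ ∈ G, w₁,w₂ ∈ W, if and only if for all g₁,g₂ ∈ G: φ(ω₁(g₁,g₂)) − ω₀(i(g₁), i(g₂)) = ρ₀⁰(i(g₁))(ϕ(g₂)) − ϕ(g₁g₂) + ϕ(g₁). -/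
/-- the map `ε(g,w) = (i g, φ w + ϕ g)` is multiplicative for the twisted
products on `G × W` and `H × V` iff the cocycle relation
`φ(ω₁(g₁,g₂)) − ω₀(i g₁, i g₂) = ρ₀⁰(i g₁)(ϕ g₂) − ϕ(g₁g₂) + ϕ(g₁)` holds. -/
theorem stmt10 {G : Type*} {H : Type*} [Group G] [Group H] (i : G →* H) (act : G → H → G)
    (hact_one : ∀ g : G, act g 1 = g)
    (hact_mul : ∀ (g : G) (h₀ h₁ : H), act (act g h₀) h₁ = act g (h₀ * h₁))
    (hact_gmul : ∀ (g₀ g₁ : G) (h : H), act (g₀ * g₁) h = act g₀ h * act g₁ h)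
    (hequiv : ∀ (g : G) (h : H), i (act g h) = h⁻¹ * i g * h)
    (hpeiffer : ∀ g₁ g₂ : G, act g₁ (i g₂) = g₂⁻¹ * g₁ * g₂)
    {W : Type*} {V : Type*} [AddCommGroup W] [Module ℝ W] [AddCommGroup V] [Module ℝ V]
    (φ : W →ₗ[ℝ] V) (ρW : H → W ≃ₗ[ℝ] W) (ρV : H → V ≃ₗ[ℝ] V) (ρ₁ : G → V →ₗ[ℝ] W)
    (hρW_mul : ∀ (h₀ h₁ : H) (w : W), ρW (h₀ * h₁) w = ρW h₀ (ρW h₁ w))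
    (hρV_mul : ∀ (h₀ h₁ : H) (v : V), ρV (h₀ * h₁) v = ρV h₀ (ρV h₁ v))
    (hφρ : ∀ (h : H) (w : W), φ (ρW h w) = ρV h (φ w))
    (hρ₁_mul : ∀ (g₀ g₁ : G) (v : V),
      ρ₁ (g₀ * g₁) v = ρ₁ g₀ v + ρ₁ g₁ v + ρ₁ g₀ (φ (ρ₁ g₁ v)))
    (hρV_i : ∀ (g : G) (v : V), ρV (i g) v = v + φ (ρ₁ g v))
    (hρW_i : ∀ (g : G) (w : W), ρW (i g) w = w + ρ₁ g (φ w))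
    (hρ₁_act : ∀ (g : G) (h : H) (v : V), ρ₁ (act g h) v = (ρW h).symm (ρ₁ g (ρV h v)))
    (ω₀ : H → H → V) (ω₁ : G → G → W) (α : H → G → W) (ϕ : G → V) :
    (∀ (g₁ g₂ : G) (w₁ w₂ : W),
      (((i (g₁ * g₂) : H), φ (w₁ + ρW (i g₁) w₂ + ω₁ g₁ g₂) + ϕ (g₁ * g₂)) : H × V) =
        ((i g₁ * i g₂ : H),
          (φ w₁ + ϕ g₁) + ρV (i g₁) (φ w₂ + ϕ g₂) + ω₀ (i g₁) (i g₂))) ↔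
    (∀ g₁ g₂ : G,
      φ (ω₁ g₁ g₂) - ω₀ (i g₁) (i g₂) = ρV (i g₁) (ϕ g₂) - ϕ (g₁ * g₂) + ϕ g₁) := by
  constructor
  · intro h g₁ g₂
    have h2 := congrArg Prod.snd (h g₁ g₂ 0 0)
    simp only [map_add, map_zero, hφρ, zero_add, add_zero] at h2
    linear_combination (norm := module) h2
  · intro h g₁ g₂ w₁ w₂
    refine Prod.ext (by simp) ?_
    simp only [map_add, hφρ]
    linear_combination (norm := module) h g₁ g₂
end

section
/- Let (i : G → H) be a crossed module of groups with a 2-representation (ρ₀¹, ρ₀⁰, ρ₁) on a linear map φ : W → V of real vector spaces, and let ω₀ : H × H → V, α : H × G → W be arbitrary maps. Define, for (g,w) ∈ G × W and (h,v) ∈ H × V, the operation (g,w)^{(h,v)} := (g^h, ρ₀¹(h)⁻¹(w + ρ₁(g)(v)) + α(h,g)). Then the compatibility (g,w)^{(h₁,v₁)∗(h₂,v₂)} = ((g,w)^{(h₁,v₁)})^{(h₂,v₂)} holds for all g ∈ G, w ∈ W, h₁,h₂ ∈ H, v₁,v₂ ∈ V (where (h₁,v₁)∗(h₂,v₂) :=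 (h₁h₂, v₁ + ρ₀⁰(h₁)(v₂) + ω₀(h₁,h₂))) if and only if for all h₁,h₂ ∈ H and g ∈ G: ρ₀¹(h₁h₂)⁻¹(ρ₁(g)(ω₀(h₁,h₂))) = ρ₀¹(h₂)⁻¹(α(h₁,g)) − α(h₁h₂, g) + α(h₂, g^{h₁}). -/
/-- the formula `(g,w)^{(h,v)} = (g^h, ρ₀¹(h)⁻¹(w + ρ₁(g)v) + α(h,g))` is
compatible with the twisted product on `H × V` iff
`ρ₀¹(h₁h₂)⁻¹(ρ₁(g)(ω₀(h₁,h₂))) = ρ₀¹(h₂)⁻¹(α(h₁,g)) − α(h₁h₂,g) + α(h₂,g^{h₁})`. -/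
theorem stmt11 {G : Type*} {H : Type*} [Group G] [Group H] (i : G →* H) (act : G → H → G)
    (hact_one : ∀ g : G, act g 1 = g)
    (hact_mul : ∀ (g : G) (h₀ h₁ : H), act (act g h₀) h₁ = act g (h₀ * h₁))
    (hact_gmul : ∀ (g₀ g₁ : G) (h : H), act (g₀ * g₁) h = act g₀ h * act g₁ h)
    (hequiv : ∀ (g : G) (h : H), i (act g h) = h⁻¹ * i g * h)
    (hpeiffer : ∀ g₁ g₂ : G, act g₁ (i g₂) = g₂⁻¹ * g₁ * g₂)
    {W : Type*} {V : Type*} [AddCommGroup W] [Module ℝ W] [AddCommGroup V] [Module ℝ V]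
    (φ : W →ₗ[ℝ] V) (ρW : H → W ≃ₗ[ℝ] W) (ρV : H → V ≃ₗ[ℝ] V) (ρ₁ : G → V →ₗ[ℝ] W)
    (hρW_mul : ∀ (h₀ h₁ : H) (w : W), ρW (h₀ * h₁) w = ρW h₀ (ρW h₁ w))
    (hρV_mul : ∀ (h₀ h₁ : H) (v : V), ρV (h₀ * h₁) v = ρV h₀ (ρV h₁ v))
    (hφρ : ∀ (h : H) (w : W), φ (ρW h w) = ρV h (φ w))
    (hρ₁_mul : ∀ (g₀ g₁ : G) (v : V),
      ρ₁ (g₀ * g₁) v = ρ₁ g₀ v + ρ₁ g₁ v + ρ₁ g₀ (φ (ρ₁ g₁ v)))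
    (hρV_i : ∀ (g : G) (v : V), ρV (i g) v = v + φ (ρ₁ g v))
    (hρW_i : ∀ (g : G) (w : W), ρW (i g) w = w + ρ₁ g (φ w))
    (hρ₁_act : ∀ (g : G) (h : H) (v : V), ρ₁ (act g h) v = (ρW h).symm (ρ₁ g (ρV h v)))
    (ω₀ : H → H → V) (α : H → G → W) :
    (∀ (g : G) (w : W) (h₁ h₂ : H) (v₁ v₂ : V),
      ((act g (h₁ * h₂),
          (ρW (h₁ * h₂)).symm (w + ρ₁ g (v₁ + ρV h₁ v₂ + ω₀ h₁ h₂)) + α (h₁ * h₂) g) :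
        G × W) =
      ((act (act g h₁) h₂,
          (ρW h₂).symm (((ρW h₁).symm (w + ρ₁ g v₁) + α h₁ g) + ρ₁ (act g h₁) v₂) +
            α h₂ (act g h₁)) : G × W)) ↔
    (∀ (h₁ h₂ : H) (g : G),
      (ρW (h₁ * h₂)).symm (ρ₁ g (ω₀ h₁ h₂)) =
        (ρW h₂).symm (α h₁ g) - α (h₁ * h₂) g + α h₂ (act g h₁)) := by
  have hsymm : ∀ (h₁ h₂ : H) (x : W),
      (ρW (h₁ * h₂)).symm x = (ρW h₂).symm ((ρW h₁).symm x) := by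
    intro h₁ h₂ x
    apply (ρW (h₁ * h₂)).injective
    rw [LinearEquiv.apply_symm_apply, hρW_mul, LinearEquiv.apply_symm_apply,
      LinearEquiv.apply_symm_apply]
  constructor
  · intro hcomp h₁ h₂ g
    have h2 := congrArg Prod.snd (hcomp g 0 h₁ h₂ 0 0)
    simp only [map_zero, zero_add, add_zero, hρ₁_act] at h2
    rw [hsymm]
    rw [hsymm] at h2
    rw [sub_add_eq_add_sub, eq_sub_iff_add_eq]
    exact h2
  · intro hc g w h₁ h₂ v₁ v₂
    simp only [Prod.mk.injEq]
    refine ⟨(hact_mul g h₁ h₂).symm, ?_⟩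
    have key := hc h₁ h₂ g
    rw [hsymm] at key ⊢
    simp only [map_add, hρ₁_act, hsymm]
    rw [key]
    abel
end

section
/- Let (i : G → H) be a crossed module of groups with a 2-representation (ρ₀¹, ρ₀⁰, ρ₁) on a linear map φ : W → V of real vector spaces, and let ω₁ : G × G → W, α : H × G → W be arbitrary maps. Define the action (g,w)^{(h,v)} := (g^h, ρ₀¹(h)⁻¹(w + ρ₁(g)(v)) + α(h,g)) and the twisted product (g₀,w₀)∗(g₁,w₁) := (g₀g₁, w₀ + ρ₀¹(i(g₀))(w₁) + ω₁(g₀,g₁)) on G × W. Then the identity ((g₁,w₁)∗(g₂,w₂))^{(h,v)} = (g₁,w₁)^{(h,v)} ∗ (g₂,w₂)^{(h,v)} holds for all g₁,g₂ ∈ G, w₁,w₂ ∈ W, h ∈ H, v ∈ V if and only if for all g₁,g₂ ∈ G, h ∈ H: ρ₀¹(h)⁻¹(ω₁(g₁,g₂)) − ω₁(g₁^h, g₂^h) = ρ₀¹(i(g₁^h))(α(h,g₂)) − α(h, g₁g₂) + α(h, g₁). -/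
/-- the action `(g,w)^{(h,v)}` is by automorphisms of the twisted product on
`G × W` iff `ρ₀¹(h)⁻¹(ω₁(g₁,g₂)) − ω₁(g₁^h,g₂^h) = ρ₀¹(i(g₁^h))(α(h,g₂)) − α(h,g₁g₂) + α(h,g₁)`. -/
theorem stmt14 {G : Type*} {H : Type*} [Group G] [Group H] (i : G →* H) (act : G → H → G)
    (hact_one : ∀ g : G, act g 1 = g)
    (hact_mul : ∀ (g : G) (h₀ h₁ : H), act (act g h₀) h₁ = act g (h₀ * h₁))
    (hact_gmul : ∀ (g₀ g₁ : G) (h : H), act (g₀ * g₁) h = act g₀ h * act g₁ h)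
    (hequiv : ∀ (g : G) (h : H), i (act g h) = h⁻¹ * i g * h)
    (hpeiffer : ∀ g₁ g₂ : G, act g₁ (i g₂) = g₂⁻¹ * g₁ * g₂)
    {W : Type*} {V : Type*} [AddCommGroup W] [Module ℝ W] [AddCommGroup V] [Module ℝ V]
    (φ : W →ₗ[ℝ] V) (ρW : H → W ≃ₗ[ℝ] W) (ρV : H → V ≃ₗ[ℝ] V) (ρ₁ : G → V →ₗ[ℝ] W)
    (hρW_mul : ∀ (h₀ h₁ : H) (w : W), ρW (h₀ * h₁) w = ρW h₀ (ρW h₁ w))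
    (hρV_mul : ∀ (h₀ h₁ : H) (v : V), ρV (h₀ * h₁) v = ρV h₀ (ρV h₁ v))
    (hφρ : ∀ (h : H) (w : W), φ (ρW h w) = ρV h (φ w))
    (hρ₁_mul : ∀ (g₀ g₁ : G) (v : V),
      ρ₁ (g₀ * g₁) v = ρ₁ g₀ v + ρ₁ g₁ v + ρ₁ g₀ (φ (ρ₁ g₁ v)))
    (hρV_i : ∀ (g : G) (v : V), ρV (i g) v = v + φ (ρ₁ g v))
    (hρW_i : ∀ (g : G) (w : W), ρW (i g) w = w + ρ₁ g (φ w))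
    (hρ₁_act : ∀ (g : G) (h : H) (v : V), ρ₁ (act g h) v = (ρW h).symm (ρ₁ g (ρV h v)))
    (ω₁ : G → G → W) (α : H → G → W) :
    (∀ (g₁ g₂ : G) (w₁ w₂ : W) (h : H) (v : V),
      ((act (g₁ * g₂) h,
          (ρW h).symm ((w₁ + ρW (i g₁) w₂ + ω₁ g₁ g₂) + ρ₁ (g₁ * g₂) v) +
            α h (g₁ * g₂)) : G × W) =
        ((act g₁ h * act g₂ h,
          ((ρW h).symm (w₁ + ρ₁ g₁ v) + α h g₁) +
            ρW (i (act g₁ h)) ((ρW h).symm (w₂ + ρ₁ g₂ v) + α h g₂) +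
            ω₁ (act g₁ h) (act g₂ h)) : G × W)) ↔
    (∀ (g₁ g₂ : G) (h : H),
      (ρW h).symm (ω₁ g₁ g₂) - ω₁ (act g₁ h) (act g₂ h) =
        ρW (i (act g₁ h)) (α h g₂) - α h (g₁ * g₂) + α h g₁) := by

  constructor
  · intro hall g₁ g₂ h
    have h0 := hall g₁ g₂ 0 0 h 0
    rw [Prod.ext_iff] at h0
    have h0' := h0.2
    simp only [map_zero, add_zero, zero_add] at h0'
    linear_combination (norm := abel) h0'
  · intro hc g₁ g₂ w₁ w₂ h v
    have key : ∀ x : W, ρW (i (act g₁ h)) ((ρW h).symm x) = (ρW h).symm (ρW (i g₁) x) := by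
      intro x
      rw [hρW_i, hρW_i, map_add, hρ₁_act]
      congr 2
      rw [← hφρ, LinearEquiv.apply_symm_apply]
    have key2 : ∀ x : W, ρ₁ (act g₁ h) (φ ((ρW h).symm x)) = (ρW h).symm (ρ₁ g₁ (φ x)) := by
      intro x
      rw [hρ₁_act]
      congr 2
      rw [← hφρ, LinearEquiv.apply_symm_apply]
    rw [Prod.ext_iff]
    refine ⟨by rw [hact_gmul], ?_⟩
    simp only [map_add, key, hρ₁_mul, hρW_i]
    linear_combination (norm := abel) hc g₁ g₂ h + hρW_i (act g₁ h) (α h g₂)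
      - key2 w₂ - key2 ((ρ₁ g₂) v)
end

section
/- Let (i : G → H) be a crossed module of groups with a 2-representation (ρ₀¹, ρ₀⁰, ρ₁) on a linear map φ : W → V of real vector spaces. Suppose λ₀ : H → V and λ₁ : G → W satisfy: λ₀(h₀h₁) = λ₀(h₀) + ρ₀⁰(h₀)(λ₀(h₁)) for all h₀,h₁ ∈ H; λ₁(g₀g₁) = λ₁(g₀) + ρ₀¹(i(g₀))(λ₁(g₁)) for all g₀,g₁ ∈ G; λ₀(h·i(g)) = λ₀(h) + φ(ρ₀¹(h)(λ₁(g))) for all g ∈ G, h ∈ H; and λ₁(g^h) = ρ₀¹(h)⁻¹(ρ₁(g)(λ₀(h))) + ρ₀¹(h)⁻¹(λ₁(g)) for all g ∈ G, h ∈ H. Define λ̄ : G × H → W × V by λ̄(g,h) := (ρ₀¹(h)(λ₁(g)), λ₀(h)). Then: (a) ρ₀¹(h)(λ₁(g₁g₀)) = ρ₀¹(h·i(g₁))(λ₁(g₀)) + ρ₀¹(h)(λ₁(g₁)) for all g₀,g₁ ∈ G, h ∈ H; (b) λ̄ is a crossed homomorphism with respect to ρ̄, i.e. λ̄((g₀,h₀)·(g₁,h₁))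 = λ̄(g₀,h₀) + ρ̄(g₀,h₀)(λ̄(g₁,h₁)) for all g₀,g₁ ∈ G, h₀,h₁ ∈ H, where (g₀,h₀)·(g₁,h₁) := (g₀^{h₁}·g₁, h₀h₁) and ρ̄(g,h)(w,v) := (ρ₀¹(h·i(g))(w) + ρ₀¹(h)(ρ₁(g)(v)), ρ₀⁰(h)(v)). -/
/-- if `λ₀, λ₁` are crossed homomorphisms compatible with the structure maps,
then `λ̄(g,h) = (ρ₀¹(h)(λ₁ g), λ₀ h)` is a crossed homomorphism with respect to the honest
representation `ρ̄` of the semidirect product. -/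
theorem stmt18 {G : Type*} {H : Type*} [Group G] [Group H] (i : G →* H) (act : G → H → G)
    (hact_one : ∀ g : G, act g 1 = g)
    (hact_mul : ∀ (g : G) (h₀ h₁ : H), act (act g h₀) h₁ = act g (h₀ * h₁))
    (hact_gmul : ∀ (g₀ g₁ : G) (h : H), act (g₀ * g₁) h = act g₀ h * act g₁ h)
    (hequiv : ∀ (g : G) (h : H), i (act g h) = h⁻¹ * i g * h)
    (hpeiffer : ∀ g₁ g₂ : G, act g₁ (i g₂) = g₂⁻¹ * g₁ * g₂)
    {W : Type*} {V : Type*} [AddCommGroup W] [Module ℝ W] [AddCommGroup V] [Module ℝ V]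
    (φ : W →ₗ[ℝ] V) (ρW : H → W ≃ₗ[ℝ] W) (ρV : H → V ≃ₗ[ℝ] V) (ρ₁ : G → V →ₗ[ℝ] W)
    (hρW_mul : ∀ (h₀ h₁ : H) (w : W), ρW (h₀ * h₁) w = ρW h₀ (ρW h₁ w))
    (hρV_mul : ∀ (h₀ h₁ : H) (v : V), ρV (h₀ * h₁) v = ρV h₀ (ρV h₁ v))
    (hφρ : ∀ (h : H) (w : W), φ (ρW h w) = ρV h (φ w))
    (hρ₁_mul : ∀ (g₀ g₁ : G) (v : V),
      ρ₁ (g₀ * g₁) v = ρ₁ g₀ v + ρ₁ g₁ v + ρ₁ g₀ (φ (ρ₁ g₁ v)))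
    (hρV_i : ∀ (g : G) (v : V), ρV (i g) v = v + φ (ρ₁ g v))
    (hρW_i : ∀ (g : G) (w : W), ρW (i g) w = w + ρ₁ g (φ w))
    (hρ₁_act : ∀ (g : G) (h : H) (v : V), ρ₁ (act g h) v = (ρW h).symm (ρ₁ g (ρV h v)))
    (lam₀ : H → V) (lam₁ : G → W)
    (hlam₀ : ∀ h₀ h₁ : H, lam₀ (h₀ * h₁) = lam₀ h₀ + ρV h₀ (lam₀ h₁))
    (hlam₁ : ∀ g₀ g₁ : G, lam₁ (g₀ * g₁) = lam₁ g₀ + ρW (i g₀) (lam₁ g₁))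
    (hlam₀i : ∀ (g : G) (h : H), lam₀ (h * i g) = lam₀ h + φ (ρW h (lam₁ g)))
    (hlam₁act : ∀ (g : G) (h : H),
      lam₁ (act g h) = (ρW h).symm (ρ₁ g (lam₀ h)) + (ρW h).symm (lam₁ g)) :
    -- (a)
    (∀ (g₀ g₁ : G) (h : H),
      ρW h (lam₁ (g₁ * g₀)) = ρW (h * i g₁) (lam₁ g₀) + ρW h (lam₁ g₁)) ∧
    -- (b) λ̄ is a crossed homomorphism with respect to ρ̄
    (∀ (g₀ g₁ : G) (h₀ h₁ : H),
      ((ρW (h₀ * h₁) (lam₁ (act g₀ h₁ * g₁)), lam₀ (h₀ * h₁)) : W × V) =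
        ((ρW h₀ (lam₁ g₀), lam₀ h₀) : W × V) +
          ((ρW (h₀ * i g₀) (ρW h₁ (lam₁ g₁)) + ρW h₀ (ρ₁ g₀ (lam₀ h₁)),
            ρV h₀ (lam₀ h₁)) : W × V)) := by
  constructor
  · intro g₀ g₁ h
    rw [hlam₁, map_add, hρW_mul]
    abel
  · intro g₀ g₁ h₀ h₁
    refine Prod.ext ?_ ?_
    · show ρW (h₀ * h₁) (lam₁ (act g₀ h₁ * g₁)) =
        ρW h₀ (lam₁ g₀) + (ρW (h₀ * i g₀) (ρW h₁ (lam₁ g₁)) + ρW h₀ (ρ₁ g₀ (lam₀ h₁)))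
      rw [hlam₁, map_add, hlam₁act, map_add]
      simp only [hρW_mul h₀ h₁, (ρW h₁).apply_symm_apply]
      rw [← hρW_mul h₀ h₁]
      have key : ρW (h₀ * h₁) (ρW (i (act g₀ h₁)) (lam₁ g₁)) =
          ρW (h₀ * i g₀) (ρW h₁ (lam₁ g₁)) := by
        rw [← hρW_mul, ← hρW_mul, hequiv]
        have : h₀ * h₁ * (h₁⁻¹ * i g₀ * h₁) = h₀ * i g₀ * h₁ := by group
        rw [this]
      rw [key]
      abel
    · show lam₀ (h₀ * h₁) = lam₀ h₀ + ρV h₀ (lam₀ h₁)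
      exact hlam₀ h₀ h₁
end

section
/- Let (i : G → H) be a crossed module of groups, and let ω₀ : H × H → ℝ and ϕ : G → ℝ satisfy: (1) ω₀(h₁,h₂) − ω₀(h₀h₁,h₂) + ω₀(h₀,h₁h₂) − ω₀(h₀,h₁) = 0 for all h₀,h₁,h₂ ∈ H; (2) −ω₀(i(g₁), i(g₂)) = ϕ(g₂) − ϕ(g₁g₂) + ϕ(g₁) for all g₁,g₂ ∈ G; (3) ϕ(g^h) − ϕ(g) = ω₀(i(g), h) + ω₀(h⁻¹, i(g)·h) − ω₀(h⁻¹, h) for all g ∈ G, h ∈ H. Define f : G × H → ℝ by f(g,h) := −ω₀(h, i(g)) − ϕ(g). Then: (a) f(g₂g₁, h) = f(g₂, h) + f(g₁, h·i(g₂)) for all g₁,g₂ ∈ G, h ∈ H; (b) f(g₁,h₁) − f(g₀^{h₁}·g₁, h₀h₁) + f(g₀,h₀) = ω₀(h₀·i(g₀), h₁·i(g₁)) − ω₀(h₀,h₁) for all g₀,g₁ ∈ G, h₀,h₁ ∈ H. -/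
/-- given a crossed module and `(ω₀, ϕ)` satisfying the three listed
equations, the map `f(g,h) := −ω₀(h, i g) − ϕ(g)` satisfies `∂f = 0` and
`∂ω₀ + δf = 0`. -/
theorem stmt19 {G : Type*} {H : Type*} [Group G] [Group H] (i : G →* H) (act : G → H → G)
    (hact_one : ∀ g : G, act g 1 = g)
    (hact_mul : ∀ (g : G) (h₀ h₁ : H), act (act g h₀) h₁ = act g (h₀ * h₁))
    (hact_gmul : ∀ (g₀ g₁ : G) (h : H), act (g₀ * g₁) h = act g₀ h * act g₁ h)
    (hequiv : ∀ (g : G) (h : H), i (act g h) = h⁻¹ * i g * h)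
    (hpeiffer : ∀ g₁ g₂ : G, act g₁ (i g₂) = g₂⁻¹ * g₁ * g₂)
    (ω₀ : H → H → ℝ) (ϕ : G → ℝ)
    (hω₀ : ∀ h₀ h₁ h₂ : H,
      ω₀ h₁ h₂ - ω₀ (h₀ * h₁) h₂ + ω₀ h₀ (h₁ * h₂) - ω₀ h₀ h₁ = 0)
    (hϕ : ∀ g₁ g₂ : G, -ω₀ (i g₁) (i g₂) = ϕ g₂ - ϕ (g₁ * g₂) + ϕ g₁)
    (hϕact : ∀ (g : G) (h : H),
      ϕ (act g h) - ϕ g = ω₀ (i g) h + ω₀ h⁻¹ (i g * h) - ω₀ h⁻¹ h) :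
    -- (a)
    (∀ (g₁ g₂ : G) (h : H),
      -ω₀ h (i (g₂ * g₁)) - ϕ (g₂ * g₁) =
        (-ω₀ h (i g₂) - ϕ g₂) + (-ω₀ (h * i g₂) (i g₁) - ϕ g₁)) ∧
    -- (b)
    (∀ (g₀ g₁ : G) (h₀ h₁ : H),
      (-ω₀ h₁ (i g₁) - ϕ g₁) -
          (-ω₀ (h₀ * h₁) (i (act g₀ h₁ * g₁)) - ϕ (act g₀ h₁ * g₁)) +
        (-ω₀ h₀ (i g₀) - ϕ g₀) =
      ω₀ (h₀ * i g₀) (h₁ * i g₁) - ω₀ h₀ h₁) := by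
  constructor
  · intro g₁ g₂ h
    have h1 := hω₀ h (i g₂) (i g₁)
    have h2 := hϕ g₂ g₁
    simp only [map_mul]
    linarith
  · intro g₀ g₁ h₀ h₁
    have h1 := hϕ (act g₀ h₁) g₁
    have h2 := hϕact g₀ h₁
    have c1 := hω₀ h₀ (i g₀) (h₁ * i g₁)
    have c2 := hω₀ (i g₀) h₁ (i g₁)
    have c3 := hω₀ h₀ h₁ (h₁⁻¹ * i g₀ * h₁ * i g₁)
    have c4 := hω₀ h₁ (h₁⁻¹ * i g₀ * h₁) (i g₁)
    have c5 := hω₀ h₁ h₁⁻¹ (i g₀ * h₁)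
    have c6 := hω₀ h₁ h₁⁻¹ h₁
    have c7 := hω₀ (1:H) 1 (i g₀ * h₁)
    have c8 := hω₀ (1:H) 1 h₁
    have c9 := hω₀ h₁ 1 1
    have h3 := hϕact 1 1
    simp only [map_mul, hequiv, mul_assoc, one_mul, mul_one, mul_inv_cancel_left,
      inv_mul_cancel_left, mul_inv_cancel, inv_mul_cancel, map_one, inv_one, hact_one] at *
    linarith
end
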